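/- Let X be a spike prior such that each X_n (as an ℝⁿ-valued random variable) is (σ²/n)-subgaussian for some constant σ > 0. If 0 ≤ λ < 1/σ, then GWig(λ,X) is contiguous to GWig(0). -/

import Mathlib

open MeasureTheory ProbabilityTheory Filter Topology ENNReal

noncomputable section

/-- Contiguity of a sequence of measures: `Q ◁ P`. -/
def Contiguous {Ω : ℕ → Type} [∀ n, MeasurableSpace (Ω n)]
    (Q P : ∀ n, Measure (Ω n)) : Prop :=
  ∀ A : ∀ n, Set (Ω n), (∀ n, MeasurableSet (A n)) →
    Tendsto (fun n => P n (A n)) atTop (𝓝 0) →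
    Tendsto (fun n => Q n (A n)) atTop (𝓝 0)

/-- A spike prior: a family of probability measures on ℝⁿ with ‖x‖ → 1 in probability. -/
structure SpikePrior where
  μ : ∀ n : ℕ, Measure (EuclideanSpace ℝ (Fin n))
  isProb : ∀ n, IsProbabilityMeasure (μ n)
  norm_tendsto_one : ∀ ε : ℝ, 0 < ε →
    Tendsto (fun n => μ n {x | ε < |‖x‖ - 1|}) atTop (𝓝 0)

/-- The second moment `E_{x,x'} exp((n λ²/2) ⟨x,x'⟩²)` (valued in `[0,∞]`). -/
def wignerSecondMoment (μ : ∀ n : ℕ, Measure (EuclideanSpace ℝ (Fin n)))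
    (lam : ℝ) (n : ℕ) : ℝ≥0∞ :=
  ∫⁻ p, ENNReal.ofReal (Real.exp ((n * lam ^ 2 / 2) * (inner ℝ p.1 p.2 : ℝ) ^ 2))
    ∂((μ n).prod (μ n))

/-- Wigner noise matrix: symmetric, entries independent up to symmetry, off-diagonal `P`,
diagonal `Pd`. -/
def wignerNoise (P Pd : Measure ℝ) (n : ℕ) : Measure (Fin n → Fin n → ℝ) :=
  (Measure.pi fun p : Fin n × Fin n => if p.1 = p.2 then Pd else P).map
    (fun g i j => if i ≤ j then g (i, j) else g (j, i))

/-- The general spiked Wigner model `Wig(λ, P, Pd, μ)`: law of `λ x xᵀ + n^{-1/2} W`. -/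
def spikedWigner (lam : ℝ) (P Pd : Measure ℝ) {n : ℕ}
    (μ : Measure (EuclideanSpace ℝ (Fin n))) : Measure (Fin n → Fin n → ℝ) :=
  (μ.prod (wignerNoise P Pd n)).map
    (fun q i j => lam * (q.1 i * q.1 j) + (Real.sqrt n)⁻¹ * q.2 i j)

/-- The unspiked Wigner model `Wig(0, P, Pd)`: law of `n^{-1/2} W`. -/
def unspikedWigner (P Pd : Measure ℝ) (n : ℕ) : Measure (Fin n → Fin n → ℝ) :=
  (wignerNoise P Pd n).map (fun W i j => (Real.sqrt n)⁻¹ * W i j)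

/-- Spiked Gaussian Wigner model `GWig(λ, μ)` (GOE noise). -/
def GWig (lam : ℝ) {n : ℕ} (μ : Measure (EuclideanSpace ℝ (Fin n))) :
    Measure (Fin n → Fin n → ℝ) :=
  spikedWigner lam (gaussianReal 0 1) (gaussianReal 0 2) μ

/-- Unspiked Gaussian Wigner model `GWig(0)`. -/
def GWig0 (n : ℕ) : Measure (Fin n → Fin n → ℝ) :=
  unspikedWigner (gaussianReal 0 1) (gaussianReal 0 2) n

/-- A real random variable `Z` on `(Ω, μ)` is `s2`-subgaussian. -/
def IsSubgaussian {Ω : Type} [MeasurableSpace Ω] (μ : Measure Ω) (Z : Ω → ℝ) (s2 : ℝ) : Prop :=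
  Integrable Z μ ∧ (∫ ω, Z ω ∂μ) = 0 ∧
    ∀ v : ℝ, ∫⁻ ω, ENNReal.ofReal (Real.exp (v * Z ω)) ∂μ
      ≤ ENNReal.ofReal (Real.exp (s2 * v ^ 2 / 2))

/-- An ℝⁿ-valued random variable (given by its law `μ`) is `s2`-subgaussian. -/
def IsSubgaussianVec {n : ℕ} (μ : Measure (EuclideanSpace ℝ (Fin n))) (s2 : ℝ) : Prop :=
  Integrable id μ ∧ (∫ x, x ∂μ) = 0 ∧
    ∀ v : EuclideanSpace ℝ (Fin n),
      ∫⁻ x, ENNReal.ofReal (Real.exp ((inner ℝ v x : ℝ))) ∂μ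
        ≤ ENNReal.ofReal (Real.exp (s2 * ‖v‖ ^ 2 / 2))

/-- `λ*_X`: the supremum of λ ≥ 0 for which the Wigner second moment stays bounded. -/
def lamStar (μ : ∀ n : ℕ, Measure (EuclideanSpace ℝ (Fin n))) : ℝ :=
  sSup {lam : ℝ | 0 ≤ lam ∧
    ∃ B : ℝ≥0∞, B ≠ ⊤ ∧ ∀ n, wignerSecondMoment μ lam n ≤ B}

/-- Standard Gaussian on `EuclideanSpace ℝ (Fin n)`. -/
def stdGaussianE (n : ℕ) : Measure (EuclideanSpace ℝ (Fin n)) :=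
  (Measure.pi fun _ : Fin n => gaussianReal 0 1).map
    (fun y => (WithLp.equiv 2 (Fin n → ℝ)).symm y)

/-- The square root of a positive semidefinite matrix (removed from Mathlib; old definition). -/
def Matrix.PosSemidef.sqrt {n : Type*} [Fintype n] [DecidableEq n] {A : Matrix n n ℝ}
    (hA : A.PosSemidef) : Matrix n n ℝ :=
  hA.1.eigenvectorUnitary.1 * Matrix.diagonal ((↑) ∘ Real.sqrt ∘ hA.1.eigenvalues) *
    (star hA.1.eigenvectorUnitary : Matrix n n ℝ)

open scoped Classical in
/-- Centered multivariate Gaussian `N(0, S)` (zero measure when `S` is not psd). -/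
def gaussianCov {n : ℕ} (S : Matrix (Fin n) (Fin n) ℝ) : Measure (EuclideanSpace ℝ (Fin n)) :=
  if h : S.PosSemidef then
    (stdGaussianE n).map
      (fun w => (WithLp.equiv 2 (Fin n → ℝ)).symm (h.sqrt.mulVec (fun i => w i)))
  else 0

/-- The spiked Wishart model: the joint law of `N` i.i.d. samples from `N(0, I + β x xᵀ)`
with `x ~ μ`. -/
def wishartSpiked (β : ℝ) {n : ℕ} (μ : Measure (EuclideanSpace ℝ (Fin n))) (N : ℕ) :
    Measure (Fin N → EuclideanSpace ℝ (Fin n)) :=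
  μ.bind (fun x => Measure.pi fun _ : Fin N =>
    gaussianCov (1 + β • Matrix.vecMulVec (fun i => x i) (fun i => x i)))

/-- The unspiked Wishart model: `N` i.i.d. samples from `N(0, I)`. -/
def wishartNull (n N : ℕ) : Measure (Fin N → EuclideanSpace ℝ (Fin n)) :=
  Measure.pi fun _ : Fin N => stdGaussianE n

/-- The i.i.d. spike prior `iid(π/√n)`. -/
def iidPrior (π : Measure ℝ) (n : ℕ) : Measure (EuclideanSpace ℝ (Fin n)) :=
  (Measure.pi fun _ : Fin n => π).map
    (fun y => (WithLp.equiv 2 (Fin n → ℝ)).symm (fun i => y i / Real.sqrt n))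

/-- `f` is a rate function for the prior `μ`. -/
def IsRateFunction (μ : ∀ n : ℕ, Measure (EuclideanSpace ℝ (Fin n))) (f : ℝ → ℝ) : Prop :=
  (∀ t ∈ Set.Ico (0:ℝ) 1, 0 ≤ f t) ∧
  ∃ b : ℕ → ℝ → ℝ,
    (∀ n : ℕ, ∀ t ∈ Set.Ico (0:ℝ) 1,
      b n t ≤ -(1 / (n:ℝ)) *
        Real.log ((((μ n).prod (μ n)) {p | t ≤ |(inner ℝ p.1 p.2 : ℝ)|}).toReal)) ∧
    TendstoUniformlyOn b f atTop (Set.Ico 0 1)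

/-- The rate function `f` admits a local Chernoff bound for the prior `μ`. -/
def HasLocalChernoff (μ : ∀ n : ℕ, Measure (EuclideanSpace ℝ (Fin n))) (f : ℝ → ℝ) : Prop :=
  ∃ T : ℝ, 0 < T ∧ ∃ C : ℝ, 0 < C ∧ ∀ n : ℕ, ∀ t ∈ Set.Icc (0:ℝ) T,
    ((μ n).prod (μ n)) {p | t ≤ |(inner ℝ p.1 p.2 : ℝ)|}
      ≤ ENNReal.ofReal (C * Real.exp (-(n:ℝ) * f t))

/-- The function `F(β,t)` appearing in the Wishart lower bound (Theorem 5.9). -/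
def wishartF (β t : ℝ) : ℝ :=
  (1 + β) * (t * ((Real.sqrt (((1 - t ^ 2) / (2 * t * (β + 1))) ^ 2 + 1)
      - (1 - t ^ 2) / (2 * t * (β + 1))) - t) / (1 - t ^ 2))
    + (1 / 2) * Real.log ((1 - (Real.sqrt (((1 - t ^ 2) / (2 * t * (β + 1))) ^ 2 + 1)
      - (1 - t ^ 2) / (2 * t * (β + 1))) ^ 2) / (1 - t ^ 2))




section AuxContiguity
open Real
open scoped NNReal


lemma gaussianReal_eq_withDensity_aux (m : ℝ) {v : ℝ≥0} (hv : v ≠ 0) :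
    gaussianReal m v = (gaussianReal 0 v).withDensity
      (fun w => ENNReal.ofReal (Real.exp ((m * w - m ^ 2 / 2) / v))) := by
  rw [gaussianReal_of_var_ne_zero m hv, gaussianReal_of_var_ne_zero 0 hv,
    ← withDensity_mul _ (measurable_gaussianPDF 0 v) (by fun_prop)]
  congr 1
  funext w
  have hv' : (v:ℝ) ≠ 0 := NNReal.coe_ne_zero.mpr hv
  simp only [Pi.mul_apply, gaussianPDF]
  rw [← ENNReal.ofReal_mul (gaussianPDFReal_nonneg 0 v w)]
  congr 1
  simp only [gaussianPDFReal, sub_zero]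
  have key : -(w - m) ^ 2 / (2 * (v:ℝ)) = -w ^ 2 / (2 * (v:ℝ)) + (m * w - m ^ 2 / 2) / v := by
    field_simp
    ring
  rw [key, Real.exp_add]
  ring

lemma lintegral_exp_linear_gaussian {v : ℝ≥0} (hv : v ≠ 0) (a b : ℝ) :
    ∫⁻ w, ENNReal.ofReal (Real.exp (a * w + b)) ∂(gaussianReal 0 v)
      = ENNReal.ofReal (Real.exp ((v:ℝ) * a ^ 2 / 2 + b)) := by
  have hv' : (v:ℝ) ≠ 0 := NNReal.coe_ne_zero.mpr hv
  rw [gaussianReal_of_var_ne_zero 0 hv,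
    lintegral_withDensity_eq_lintegral_mul _ (measurable_gaussianPDF 0 v) (by fun_prop)]
  have : ∀ w, (gaussianPDF 0 v * fun w => ENNReal.ofReal (Real.exp (a * w + b))) w
      = ENNReal.ofReal (Real.exp ((v:ℝ) * a ^ 2 / 2 + b)) * gaussianPDF ((v:ℝ) * a) v w := by
    intro w
    simp only [Pi.mul_apply, gaussianPDF]
    rw [← ENNReal.ofReal_mul (gaussianPDFReal_nonneg 0 v w),
      ← ENNReal.ofReal_mul (Real.exp_nonneg _)]
    congr 1
    simp only [gaussianPDFReal, sub_zero]
    have key : -w ^ 2 / (2 * (v:ℝ)) + (a * w + b)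
        = ((v:ℝ) * a ^ 2 / 2 + b) + -(w - (v:ℝ) * a) ^ 2 / (2 * (v:ℝ)) := by
      field_simp
      ring
    rw [mul_assoc ((√(2 * π * (v:ℝ)))⁻¹), ← Real.exp_add, key, Real.exp_add]
    ring
  simp_rw [this]
  rw [lintegral_const_mul _ (measurable_gaussianPDF _ v), lintegral_gaussianPDF_eq_one _ hv,
    mul_one]

lemma lintegral_exp_sq_gaussian {c : ℝ} (hc : c < 1) :
    ∫⁻ w, ENNReal.ofReal (Real.exp (c * w ^ 2 / 2)) ∂(gaussianReal 0 1)
      = ENNReal.ofReal ((√(2 * π))⁻¹ * ∫ w : ℝ, Real.exp (-((1 - c) / 2) * w ^ 2)) := by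
  have h2 : (0:ℝ) < (1 - c) / 2 := by linarith
  rw [gaussianReal_of_var_ne_zero 0 one_ne_zero,
    lintegral_withDensity_eq_lintegral_mul _ (measurable_gaussianPDF 0 1) (by fun_prop)]
  have : ∀ w, (gaussianPDF 0 1 * fun w => ENNReal.ofReal (Real.exp (c * w ^ 2 / 2))) w
      = ENNReal.ofReal ((√(2 * π))⁻¹ * Real.exp (-((1 - c) / 2) * w ^ 2)) := by
    intro w
    simp only [Pi.mul_apply, gaussianPDF]
    rw [← ENNReal.ofReal_mul (gaussianPDFReal_nonneg 0 1 w)]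
    congr 1
    simp only [gaussianPDFReal, sub_zero, NNReal.coe_one, mul_one]
    rw [mul_assoc, ← Real.exp_add]
    congr 2
    ring
  simp_rw [this]
  rw [← ofReal_integral_eq_lintegral_ofReal]
  · rw [integral_const_mul]
  · exact (integrable_exp_neg_mul_sq h2).const_mul _
  · filter_upwards with w
    positivity


variable {ι : Type*} [Fintype ι] [DecidableEq ι]

lemma my_lintegral_pi_prod (κ : ι → Measure ℝ) [∀ i, SigmaFinite (κ i)]
    {f : ι → ℝ → ℝ≥0∞} (hf : ∀ i, Measurable (f i)) :
    ∫⁻ g : ι → ℝ, ∏ i, f i (g i) ∂Measure.pi κ = ∏ i, ∫⁻ w, f i w ∂κ i := by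
  have hF : Measurable fun g : ι → ℝ => ∏ i, f i (g i) :=
    Finset.measurable_prod _ fun i _ => (hf i).comp (measurable_pi_apply i)
  have key : ∀ s : Finset ι, ∀ x : ι → ℝ,
      (∫⋯∫⁻_s, (fun g => ∏ i, f i (g i)) ∂κ) x
        = (∏ i ∈ sᶜ, f i (x i)) * ∏ i ∈ s, ∫⁻ w, f i w ∂κ i := by
    intro s
    induction s using Finset.induction_on with
    | empty =>
        intro x
        simp [MeasureTheory.lmarginal_empty]
    | insert i s hi ih =>
        intro x
        rw [MeasureTheory.lmarginal_insert _ hF hi]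
        have : ∀ t : ℝ, (∫⋯∫⁻_s, (fun g => ∏ j, f j (g j)) ∂κ) (Function.update x i t)
            = (f i t * ∏ j ∈ sᶜ.erase i, f j (x j)) * ∏ j ∈ s, ∫⁻ w, f j w ∂κ j := by
          intro t
          rw [ih]
          congr 1
          have hi' : i ∈ sᶜ := Finset.mem_compl.mpr hi
          rw [← Finset.prod_erase_mul _ _ hi', Function.update_self, mul_comm]
          congr 1
          exact Finset.prod_congr rfl fun j hj => by
            rw [Function.update_of_ne (Finset.ne_of_mem_erase hj)]
        simp_rw [this]
        rw [lintegral_mul_const _ ((hf i).mul_const _),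
          lintegral_mul_const _ (hf i),
          Finset.prod_insert hi, Finset.compl_insert]
        ring
  have x0 : ι → ℝ := fun _ => 0
  rw [MeasureTheory.lintegral_eq_lmarginal_univ (fun _ => (0:ℝ)), key Finset.univ]
  simp

lemma my_pi_map_add (κ : ι → Measure ℝ) [∀ i, IsProbabilityMeasure (κ i)] (m : ι → ℝ) :
    (Measure.pi κ).map (fun g => g + m) = Measure.pi (fun i => (κ i).map (· + m i)) := by
  have hmeas : Measurable fun g : ι → ℝ => g + m :=
    measurable_pi_lambda _ fun i => (measurable_pi_apply i).add_const _
  have : ∀ i, IsProbabilityMeasure ((κ i).map (· + m i)) := fun i =>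
    Measure.isProbabilityMeasure_map (measurable_id.add_const _).aemeasurable
  refine (Measure.pi_eq fun s hs => ?_).symm
  rw [Measure.map_apply hmeas (MeasurableSet.univ_pi hs)]
  have : (fun g : ι → ℝ => g + m) ⁻¹' Set.pi Set.univ s
      = Set.pi Set.univ (fun i => (· + m i) ⁻¹' s i) := by
    ext g
    simp [Set.mem_pi]
  rw [this, Measure.pi_pi]
  exact Finset.prod_congr rfl fun i _ =>
    (Measure.map_apply (measurable_id.add_const _) (hs i)).symm

lemma my_pi_withDensity (κ : ι → Measure ℝ) [∀ i, SigmaFinite (κ i)]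
    (ν : ι → Measure ℝ) [∀ i, SigmaFinite (ν i)]
    {f : ι → ℝ → ℝ≥0∞} (hf : ∀ i, Measurable (f i))
    (hν : ∀ i, ν i = (κ i).withDensity (f i)) :
    Measure.pi ν = (Measure.pi κ).withDensity (fun g => ∏ i, f i (g i)) := by
  refine Measure.pi_eq fun s hs => ?_
  rw [withDensity_apply _ (MeasurableSet.univ_pi hs)]
  have : ∀ g : ι → ℝ, (Set.pi Set.univ s).indicator (fun g => ∏ i, f i (g i)) g
      = ∏ i, (s i).indicator (f i) (g i) := by
    intro g
    by_cases hg : g ∈ Set.pi Set.univ s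
    · rw [Set.indicator_of_mem hg]
      exact Finset.prod_congr rfl fun i _ =>
        (Set.indicator_of_mem (hg i (Set.mem_univ i)) _).symm
    · rw [Set.indicator_of_notMem hg]
      rw [Set.mem_pi] at hg
      push_neg at hg
      obtain ⟨i, -, hi⟩ := hg
      exact (Finset.prod_eq_zero (Finset.mem_univ i) (Set.indicator_of_notMem hi _)).symm
  rw [← lintegral_indicator (MeasurableSet.univ_pi hs)]
  simp_rw [this]
  rw [my_lintegral_pi_prod κ fun i => (hf i).indicator (hs i)]
  exact Finset.prod_congr rfl fun i _ => by
    rw [hν i, withDensity_apply _ (hs i), ← lintegral_indicator (hs i)]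


def vr (n : ℕ) (p : Fin n × Fin n) : ℝ≥0 := if p.1 = p.2 then 2 else 1

lemma vr_ne_zero (n : ℕ) (p : Fin n × Fin n) : vr n p ≠ 0 := by
  unfold vr; split <;> norm_num

def gam (n : ℕ) : Measure (Fin n × Fin n → ℝ) := Measure.pi fun p => gaussianReal 0 (vr n p)

instance (n : ℕ) : IsProbabilityMeasure (gam n) := by
  unfold gam; infer_instance

def Tm (n : ℕ) : (Fin n × Fin n → ℝ) → (Fin n → Fin n → ℝ) :=
  fun g i j => (Real.sqrt n)⁻¹ * (if i ≤ j then g (i, j) else g (j, i))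

lemma measurable_Tm (n : ℕ) : Measurable (Tm n) := by
  refine measurable_pi_lambda _ fun i => measurable_pi_lambda _ fun j => ?_
  refine Measurable.const_mul ?_ _
  split <;> exact measurable_pi_apply _

def msh (lam : ℝ) (n : ℕ) (x : EuclideanSpace ℝ (Fin n)) : Fin n × Fin n → ℝ :=
  fun p => if p.1 ≤ p.2 then Real.sqrt n * lam * (x p.1 * x p.2) else 0

def Lam (lam : ℝ) (n : ℕ) (x : EuclideanSpace ℝ (Fin n)) (g : Fin n × Fin n → ℝ) : ℝ≥0∞ :=
  ∏ p, ENNReal.ofReal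
    (Real.exp ((msh lam n x p * g p - msh lam n x p ^ 2 / 2) / (vr n p : ℝ)))

lemma sum_msh (lam : ℝ) (n : ℕ) (x x' : EuclideanSpace ℝ (Fin n)) :
    ∑ p : Fin n × Fin n, msh lam n x p * msh lam n x' p / (vr n p : ℝ)
      = (n * lam ^ 2 / 2) * (∑ i, x i * x' i) ^ 2 := by
  set t : Fin n × Fin n → ℝ := fun p => (x p.1 * x' p.1) * (x p.2 * x' p.2) with ht
  have hsq : Real.sqrt n * Real.sqrt n = (n : ℝ) :=
    Real.mul_self_sqrt (Nat.cast_nonneg n)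
  have step1 : ∀ p : Fin n × Fin n, msh lam n x p * msh lam n x' p / (vr n p : ℝ)
      = (n * lam ^ 2) * ((if p.1 < p.2 then t p else 0) + (if p.1 = p.2 then t p / 2 else 0)) := by
    intro p
    rcases lt_trichotomy p.1 p.2 with h | h | h
    · have h1 : p.1 ≤ p.2 := le_of_lt h
      have h2 : p.1 ≠ p.2 := ne_of_lt h
      simp only [msh, vr, if_pos h1, if_pos h, if_neg h2, NNReal.coe_one, add_zero, div_one, ht]
      linear_combination lam ^ 2 * (x p.1 * x p.2 * (x' p.1 * x' p.2)) * hsq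
    · have h1 : p.1 ≤ p.2 := le_of_eq h
      have h2 : ¬ p.1 < p.2 := by simp [h]
      simp only [msh, vr, if_pos h1, if_pos h, if_neg h2, NNReal.coe_two, zero_add, ht]
      linear_combination lam ^ 2 * (x p.1 * x p.2 * (x' p.1 * x' p.2)) / 2 * hsq
    · have h1 : ¬ p.1 ≤ p.2 := not_le_of_gt h
      have h2 : ¬ p.1 < p.2 := asymm h
      have h3 : p.1 ≠ p.2 := ne_of_gt h
      simp [msh, if_neg h1, if_neg h2, if_neg h3]
  have swap_sum : ∑ p : Fin n × Fin n, (if p.2 < p.1 then t p else 0)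
      = ∑ p : Fin n × Fin n, (if p.1 < p.2 then t p else 0) := by
    refine Fintype.sum_equiv (Equiv.prodComm (Fin n) (Fin n)) _ _ fun p => ?_
    simp only [Equiv.prodComm_apply, Prod.snd_swap, Prod.fst_swap, ht]
    split <;> ring
  have step3 : (∑ i, x i * x' i) ^ 2
      = 2 * (∑ p : Fin n × Fin n, (if p.1 < p.2 then t p else 0))
        + ∑ p : Fin n × Fin n, (if p.1 = p.2 then t p else 0) := by
    have expand : (∑ i, x i * x' i) ^ 2 = ∑ p : Fin n × Fin n, t p := by
      rw [Fintype.sum_prod_type, pow_two, Finset.sum_mul_sum]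
    have tri : ∀ p : Fin n × Fin n, t p
        = (if p.1 < p.2 then t p else 0) + (if p.2 < p.1 then t p else 0)
          + (if p.1 = p.2 then t p else 0) := by
      intro p
      rcases lt_trichotomy p.1 p.2 with h | h | h
      · rw [if_pos h, if_neg (asymm h), if_neg (ne_of_lt h)]; ring
      · rw [if_neg (by rw [h]; exact lt_irrefl _), if_neg (by rw [h]; exact lt_irrefl _),
          if_pos h]; ring
      · rw [if_neg (not_lt_of_gt h), if_pos h, if_neg (ne_of_gt h)]; ring
    calc (∑ i, x i * x' i) ^ 2 = ∑ p : Fin n × Fin n, t p := expand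
      _ = ∑ p : Fin n × Fin n, ((if p.1 < p.2 then t p else 0) + (if p.2 < p.1 then t p else 0)
            + (if p.1 = p.2 then t p else 0)) := Finset.sum_congr rfl fun p _ => tri p
      _ = _ := by rw [Finset.sum_add_distrib, Finset.sum_add_distrib, swap_sum]; ring
  rw [Finset.sum_congr rfl fun p _ => step1 p, ← Finset.mul_sum, Finset.sum_add_distrib]
  rw [step3]
  have : ∑ p : Fin n × Fin n, (if p.1 = p.2 then t p / 2 else 0)
      = (∑ p : Fin n × Fin n, (if p.1 = p.2 then t p else 0)) / 2 := by
    rw [Finset.sum_div]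
    exact Finset.sum_congr rfl fun p _ => by split <;> simp
  rw [this]
  ring


end AuxContiguity

section AuxContiguity2
open Real
open scoped NNReal

lemma measurable_Lam (lam : ℝ) (n : ℕ) :
    Measurable (fun q : EuclideanSpace ℝ (Fin n) × (Fin n × Fin n → ℝ) =>
      Lam lam n q.1 q.2) := by
  unfold Lam msh
  refine Finset.measurable_prod _ fun p _ => ?_
  refine Measurable.ennreal_ofReal (Real.measurable_exp.comp ?_)
  by_cases hp : p.1 ≤ p.2 <;> simp only [hp, if_true, if_false] <;> fun_prop

lemma gam_translate (lam : ℝ) (n : ℕ) (x : EuclideanSpace ℝ (Fin n)) :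
    (gam n).map (fun g => g + msh lam n x) = (gam n).withDensity (Lam lam n x) := by
  unfold gam Lam
  rw [my_pi_map_add (fun p => gaussianReal 0 (vr n p)) (msh lam n x)]
  have hprob : ∀ p : Fin n × Fin n,
      IsProbabilityMeasure ((gaussianReal 0 (vr n p)).map (· + msh lam n x p)) := fun p =>
    Measure.isProbabilityMeasure_map (measurable_id.add_const _).aemeasurable
  refine my_pi_withDensity (fun p => gaussianReal 0 (vr n p)) _
    (f := fun p w => ENNReal.ofReal
      (Real.exp ((msh lam n x p * w - msh lam n x p ^ 2 / 2) / (vr n p : ℝ))))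
    (fun p => by fun_prop) (fun p => ?_)
  rw [gaussianReal_map_add_const, zero_add]
  exact gaussianReal_eq_withDensity_aux _ (vr_ne_zero n p)

lemma lintegral_Lam_mul_Lam (lam : ℝ) (n : ℕ) (x x' : EuclideanSpace ℝ (Fin n)) :
    ∫⁻ g, Lam lam n x g * Lam lam n x' g ∂(gam n)
      = ENNReal.ofReal (Real.exp ((n * lam ^ 2 / 2) * (inner ℝ x x' : ℝ) ^ 2)) := by
  have hcomb : ∀ g : Fin n × Fin n → ℝ, Lam lam n x g * Lam lam n x' g
      = ∏ p, ENNReal.ofReal (Real.exp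
          (((msh lam n x p + msh lam n x' p) / (vr n p : ℝ)) * g p
            + (-(msh lam n x p ^ 2 + msh lam n x' p ^ 2) / (2 * (vr n p : ℝ))))) := by
    intro g
    rw [Lam, Lam, ← Finset.prod_mul_distrib]
    refine Finset.prod_congr rfl fun p _ => ?_
    rw [← ENNReal.ofReal_mul (Real.exp_nonneg _), ← Real.exp_add]
    congr 1
    have hv : (vr n p : ℝ) ≠ 0 := NNReal.coe_ne_zero.mpr (vr_ne_zero n p)
    field_simp
    ring
  simp_rw [hcomb]
  show ∫⁻ g : Fin n × Fin n → ℝ, _ ∂(Measure.pi fun p => gaussianReal 0 (vr n p)) = _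
  rw [show (∫⁻ g : Fin n × Fin n → ℝ,
      ∏ p, ENNReal.ofReal (Real.exp
          (((msh lam n x p + msh lam n x' p) / (vr n p : ℝ)) * g p
            + (-(msh lam n x p ^ 2 + msh lam n x' p ^ 2) / (2 * (vr n p : ℝ)))))
        ∂(Measure.pi fun p => gaussianReal 0 (vr n p)))
      = ∏ p : Fin n × Fin n, ∫⁻ w, ENNReal.ofReal (Real.exp
          (((msh lam n x p + msh lam n x' p) / (vr n p : ℝ)) * w
            + (-(msh lam n x p ^ 2 + msh lam n x' p ^ 2) / (2 * (vr n p : ℝ)))))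
          ∂gaussianReal 0 (vr n p)
    from my_lintegral_pi_prod
      (f := fun p w => ENNReal.ofReal (Real.exp
          (((msh lam n x p + msh lam n x' p) / (vr n p : ℝ)) * w
            + (-(msh lam n x p ^ 2 + msh lam n x' p ^ 2) / (2 * (vr n p : ℝ))))))
      _ (fun p => by fun_prop)]
  have heach : ∀ p : Fin n × Fin n, ∫⁻ w, ENNReal.ofReal (Real.exp
      (((msh lam n x p + msh lam n x' p) / (vr n p : ℝ)) * w
        + (-(msh lam n x p ^ 2 + msh lam n x' p ^ 2) / (2 * (vr n p : ℝ)))))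
        ∂gaussianReal 0 (vr n p)
      = ENNReal.ofReal (Real.exp (msh lam n x p * msh lam n x' p / (vr n p : ℝ))) := by
    intro p
    rw [lintegral_exp_linear_gaussian (vr_ne_zero n p)]
    congr 1
    have hv : (vr n p : ℝ) ≠ 0 := NNReal.coe_ne_zero.mpr (vr_ne_zero n p)
    field_simp
    ring
  rw [Finset.prod_congr rfl fun p _ => heach p,
    ← ENNReal.ofReal_prod_of_nonneg (fun p _ => Real.exp_nonneg _), ← Real.exp_sum, sum_msh]
  have : (inner ℝ x x' : ℝ) = ∑ i, x i * x' i := by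
    simp [PiLp.inner_apply, RCLike.inner_apply, conj_trivial, mul_comm]
  rw [this]

end AuxContiguity2


section AuxContiguity3
open Real
open scoped NNReal

def msym (n : ℕ) : (Fin n × Fin n → ℝ) → (Fin n → Fin n → ℝ) :=
  fun g i j => if i ≤ j then g (i, j) else g (j, i)

lemma measurable_msym (n : ℕ) : Measurable (msym n) := by
  refine measurable_pi_lambda _ fun i => measurable_pi_lambda _ fun j => ?_
  unfold msym
  split <;> exact measurable_pi_apply _

lemma wignerNoise_eq (n : ℕ) :
    wignerNoise (gaussianReal 0 1) (gaussianReal 0 2) n = (gam n).map (msym n) := by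
  unfold wignerNoise gam
  have : (fun p : Fin n × Fin n => if p.1 = p.2 then gaussianReal 0 2 else gaussianReal 0 1)
      = fun p => gaussianReal 0 (vr n p) := by
    funext p
    by_cases h : p.1 = p.2 <;> simp [vr, h]
  rw [this]
  rfl

lemma GWig0_eq (n : ℕ) : GWig0 n = (gam n).map (Tm n) := by
  unfold GWig0 unspikedWigner
  rw [wignerNoise_eq, Measure.map_map ?h1 (measurable_msym n)]
  · rfl
  case h1 =>
    exact measurable_pi_lambda _ fun i => measurable_pi_lambda _ fun j => by fun_prop

lemma measurable_msh (lam : ℝ) (n : ℕ) :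
    Measurable fun x : EuclideanSpace ℝ (Fin n) => msh lam n x := by
  refine measurable_pi_lambda _ fun p => ?_
  unfold msh
  split <;> fun_prop

lemma GWig_eq (lam : ℝ) {n : ℕ} (hn : 1 ≤ n) (ν : Measure (EuclideanSpace ℝ (Fin n)))
    [SFinite ν] :
    GWig lam ν = (ν.prod (gam n)).map (fun q => Tm n (q.2 + msh lam n q.1)) := by
  have hsqn : Real.sqrt n ≠ 0 := by
    refine Real.sqrt_ne_zero'.mpr ?_
    exact_mod_cast Nat.pos_of_ne_zero (by omega)
  unfold GWig spikedWigner
  rw [wignerNoise_eq]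
  have h1 : ν.prod ((gam n).map (msym n)) = (ν.prod (gam n)).map (Prod.map id (msym n)) := by
    rw [← Measure.map_prod_map _ _ measurable_id (measurable_msym n), Measure.map_id]
  rw [h1, Measure.map_map]
  · congr 1
    funext q
    funext i j
    simp only [Function.comp_apply, Prod.map_fst, Prod.map_snd, id_eq, msym, Tm, msh,
      Pi.add_apply]
    by_cases hij : i ≤ j
    · rw [if_pos hij, if_pos hij, if_pos hij]
      rw [mul_add]
      rw [show (Real.sqrt n)⁻¹ * (Real.sqrt n * lam * (q.1 i * q.1 j))
          = lam * (q.1 i * q.1 j) from by field_simp]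
      ring
    · have hji : j ≤ i := le_of_not_ge hij
      rw [if_neg hij, if_neg hij, if_pos hji]
      rw [mul_add]
      rw [show (Real.sqrt n)⁻¹ * (Real.sqrt n * lam * (q.1 j * q.1 i))
          = lam * (q.1 i * q.1 j) from by field_simp]
      ring
  · exact measurable_pi_lambda _ fun i => measurable_pi_lambda _ fun j => by
      fun_prop
  · exact measurable_id.prodMap (measurable_msym n)

attribute [irreducible] Lam msh gam Tm vr msym

lemma measurable_shiftmap (lam : ℝ) (n : ℕ) :
    Measurable fun q : EuclideanSpace ℝ (Fin n) × (Fin n × Fin n → ℝ) =>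
      Tm n (q.2 + msh lam n q.1) :=
  (measurable_Tm n).comp (measurable_snd.add ((measurable_msh lam n).comp measurable_fst))

set_option maxHeartbeats 2000000 in
lemma measurable_ell (lam : ℝ) (n : ℕ) (ν : Measure (EuclideanSpace ℝ (Fin n))) [SFinite ν] :
    Measurable fun g => ∫⁻ x, Lam lam n x g ∂ν := by
  have : Measurable fun z : (Fin n × Fin n → ℝ) × EuclideanSpace ℝ (Fin n) =>
      Lam lam n z.2 z.1 :=
    (measurable_Lam lam n).comp (measurable_snd.prodMk measurable_fst)
  exact this.lintegral_prod_right'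

set_option maxHeartbeats 1000000 in
lemma GWig_rep (lam : ℝ) {n : ℕ} (hn : 1 ≤ n) (ν : Measure (EuclideanSpace ℝ (Fin n)))
    [IsFiniteMeasure ν] {A : Set (Fin n → Fin n → ℝ)} (hA : MeasurableSet A) :
    GWig lam ν A = ∫⁻ g in Tm n ⁻¹' A, (∫⁻ x, Lam lam n x g ∂ν) ∂gam n := by
  rw [GWig_eq lam hn ν, Measure.map_apply (measurable_shiftmap lam n) hA,
    Measure.prod_apply ((measurable_shiftmap lam n) hA)]
  have hstep : ∀ x : EuclideanSpace ℝ (Fin n),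
      (gam n) (Prod.mk x ⁻¹' ((fun q => Tm n (q.2 + msh lam n q.1)) ⁻¹' A))
        = ∫⁻ g in Tm n ⁻¹' A, Lam lam n x g ∂gam n := by
    intro x
    have hpre : (Prod.mk x ⁻¹' ((fun q => Tm n (q.2 + msh lam n q.1)) ⁻¹' A))
        = (fun g => g + msh lam n x) ⁻¹' (Tm n ⁻¹' A) := rfl
    rw [hpre, ← Measure.map_apply ?hadd ((measurable_Tm n) hA), gam_translate,
      withDensity_apply _ ((measurable_Tm n) hA)]
    case hadd =>
      exact measurable_pi_lambda _ fun p => (measurable_pi_apply p).add_const _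
  rw [lintegral_congr hstep]
  exact lintegral_lintegral_swap ((measurable_Lam lam n).aemeasurable)

lemma GWig0_apply (n : ℕ) {A : Set (Fin n → Fin n → ℝ)} (hA : MeasurableSet A) :
    GWig0 n A = gam n (Tm n ⁻¹' A) := by
  rw [GWig0_eq, Measure.map_apply (measurable_Tm n) hA]

set_option maxHeartbeats 2000000 in
lemma GWig_cauchySchwarz (lam : ℝ) {n : ℕ} (hn : 1 ≤ n)
    (ν : Measure (EuclideanSpace ℝ (Fin n))) [IsFiniteMeasure ν]
    {A : Set (Fin n → Fin n → ℝ)} (hA : MeasurableSet A) :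
    GWig lam ν A ≤ (GWig0 n A) ^ (1/2 : ℝ)
      * (∫⁻ q, ENNReal.ofReal (Real.exp ((n * lam ^ 2 / 2) * (inner ℝ q.1 q.2 : ℝ) ^ 2))
          ∂(ν.prod ν)) ^ (1/2 : ℝ) := by
  set B := Tm n ⁻¹' A with hB
  have hBm : MeasurableSet B := (measurable_Tm n) hA
  set ell : (Fin n × Fin n → ℝ) → ℝ≥0∞ := fun g => ∫⁻ x, Lam lam n x g ∂ν with hell
  have hellm : Measurable ell := measurable_ell lam n ν
  rw [GWig_rep lam hn ν hA]
  have hind : ∫⁻ g in B, ell g ∂gam n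
      = ∫⁻ g, (B.indicator (fun _ => (1:ℝ≥0∞)) * ell) g ∂gam n := by
    rw [← lintegral_indicator hBm]
    refine lintegral_congr fun g => ?_
    by_cases hg : g ∈ B <;> simp [hg]
  rw [hind]
  refine le_trans (ENNReal.lintegral_mul_le_Lp_mul_Lq (gam n)
    (p := 2) (q := 2) ⟨by norm_num, by norm_num, by norm_num⟩
    ((measurable_const.indicator hBm).aemeasurable) hellm.aemeasurable) ?_
  have hf2 : ∫⁻ g, (B.indicator (fun _ => (1:ℝ≥0∞)) g) ^ (2:ℝ) ∂gam n = GWig0 n A := by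
    rw [GWig0_apply n hA]
    have : ∀ g, (B.indicator (fun _ => (1:ℝ≥0∞)) g) ^ (2:ℝ)
        = B.indicator (fun _ => (1:ℝ≥0∞)) g := by
      intro g
      by_cases hg : g ∈ B <;> simp [hg, ENNReal.zero_rpow_of_pos]
    rw [lintegral_congr this]
    exact lintegral_indicator_one hBm
  rw [hf2]
  refine mul_le_mul' le_rfl (ENNReal.rpow_le_rpow (le_of_eq ?_) (by norm_num))
  have hsq : ∀ g, ell g ^ (2:ℝ)
      = ∫⁻ q, Lam lam n q.1 g * Lam lam n q.2 g ∂ν.prod ν := by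
    intro g
    have hmx : AEMeasurable (fun x => Lam lam n x g) ν :=
      ((measurable_Lam lam n).comp (measurable_id.prodMk measurable_const)).aemeasurable
    rw [show ((2:ℝ)) = ((2:ℕ):ℝ) from by norm_num, ENNReal.rpow_natCast, pow_two, hell,
      ← lintegral_prod_mul hmx hmx]
  rw [lintegral_congr hsq]
  have hjm : Measurable fun z : (Fin n × Fin n → ℝ) ×
      (EuclideanSpace ℝ (Fin n) × EuclideanSpace ℝ (Fin n)) =>
      Lam lam n z.2.1 z.1 * Lam lam n z.2.2 z.1 := by
    refine Measurable.mul ?_ ?_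
    · exact (measurable_Lam lam n).comp ((measurable_fst.comp measurable_snd).prodMk
        measurable_fst)
    · exact (measurable_Lam lam n).comp ((measurable_snd.comp measurable_snd).prodMk
        measurable_fst)
  rw [lintegral_lintegral_swap hjm.aemeasurable]
  exact lintegral_congr fun q => lintegral_Lam_mul_Lam lam n q.1 q.2

end AuxContiguity3


section AuxContiguity4
open Real
open scoped NNReal

set_option maxHeartbeats 1000000 in
lemma second_moment_bound {n : ℕ} (hn : 1 ≤ n) (σ lam ε : ℝ) (hσ : 0 < σ) (hε : 0 < ε)
    (hlam : 0 ≤ lam) (hc1 : σ * lam * (1 + ε) < 1)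
    (μ : Measure (EuclideanSpace ℝ (Fin n))) [IsProbabilityMeasure μ]
    (hsub : IsSubgaussianVec μ (σ ^ 2 / n))
    {S : Set (EuclideanSpace ℝ (Fin n))} (hSm : MeasurableSet S)
    (hSsub : ∀ x ∈ S, ‖x‖ ≤ 1 + ε) :
    ∫⁻ q, ENNReal.ofReal (Real.exp ((n * lam ^ 2 / 2) * (inner ℝ q.1 q.2 : ℝ) ^ 2))
        ∂((μ.restrict S).prod (μ.restrict S))
      ≤ ENNReal.ofReal ((√(2 * π))⁻¹
          * ∫ w : ℝ, Real.exp (-((1 - (σ * lam * (1 + ε)) ^ 2) / 2) * w ^ 2)) := by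
  have hn0 : (n:ℝ) ≠ 0 := by
    have : (0:ℝ) < n := by exact_mod_cast Nat.pos_of_ne_zero (by omega)
    exact this.ne'
  have hsqn : √(n:ℝ) * √(n:ℝ) = (n:ℝ) := Real.mul_self_sqrt (Nat.cast_nonneg n)
  set ν := μ.restrict S with hν
  have hpt : ∀ s : ℝ, ENNReal.ofReal (Real.exp ((n * lam ^ 2 / 2) * s ^ 2))
      = ∫⁻ w, ENNReal.ofReal (Real.exp ((√(n:ℝ) * lam * s) * w + 0)) ∂gaussianReal 0 1 := by
    intro s
    rw [lintegral_exp_linear_gaussian one_ne_zero]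
    congr 2
    rw [NNReal.coe_one]
    linear_combination (-(lam ^ 2 * s ^ 2) / 2) * hsqn
  have hinner : Continuous fun q : EuclideanSpace ℝ (Fin n) × EuclideanSpace ℝ (Fin n) =>
      (inner ℝ q.1 q.2 : ℝ) := continuous_inner
  have hmeasq : ∀ w : ℝ, Measurable fun q : EuclideanSpace ℝ (Fin n) × EuclideanSpace ℝ (Fin n) =>
      ENNReal.ofReal (Real.exp ((√(n:ℝ) * lam * (inner ℝ q.1 q.2 : ℝ)) * w + 0)) := by
    intro w
    exact ((Real.continuous_exp.comp
      (((continuous_const.mul hinner).mul continuous_const).add continuous_const)).measurable).ennreal_ofReal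
  have hmeasj : Measurable fun z : (EuclideanSpace ℝ (Fin n) × EuclideanSpace ℝ (Fin n)) × ℝ =>
      ENNReal.ofReal (Real.exp ((√(n:ℝ) * lam * (inner ℝ z.1.1 z.1.2 : ℝ)) * z.2 + 0)) := by
    exact ((Real.continuous_exp.comp
      (((continuous_const.mul (hinner.comp continuous_fst)).mul continuous_snd).add
        continuous_const)).measurable).ennreal_ofReal
  have key_x : ∀ (w : ℝ) (x : EuclideanSpace ℝ (Fin n)),
      ∫⁻ x', ENNReal.ofReal (Real.exp ((√(n:ℝ) * lam * (inner ℝ x x' : ℝ)) * w + 0)) ∂ν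
        ≤ ENNReal.ofReal (Real.exp (σ ^ 2 * lam ^ 2 * w ^ 2 * ‖x‖ ^ 2 / 2)) := by
    intro w x
    calc ∫⁻ x', ENNReal.ofReal (Real.exp ((√(n:ℝ) * lam * (inner ℝ x x' : ℝ)) * w + 0)) ∂ν
        ≤ ∫⁻ x', ENNReal.ofReal (Real.exp ((√(n:ℝ) * lam * (inner ℝ x x' : ℝ)) * w + 0)) ∂μ :=
          lintegral_mono' Measure.restrict_le_self le_rfl
      _ = ∫⁻ x', ENNReal.ofReal (Real.exp ((inner ℝ ((√(n:ℝ) * lam * w) • x) x' : ℝ))) ∂μ := by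
          refine lintegral_congr fun x' => ?_
          rw [real_inner_smul_left]
          congr 2
          ring
      _ ≤ ENNReal.ofReal (Real.exp ((σ ^ 2 / n) * ‖(√(n:ℝ) * lam * w) • x‖ ^ 2 / 2)) :=
          hsub.2.2 _
      _ = ENNReal.ofReal (Real.exp (σ ^ 2 * lam ^ 2 * w ^ 2 * ‖x‖ ^ 2 / 2)) := by
          congr 2
          rw [norm_smul, Real.norm_eq_abs, mul_pow, sq_abs]
          have hx2 : (√(n:ℝ) * lam * w) ^ 2 = (n:ℝ) * lam ^ 2 * w ^ 2 := by
            linear_combination (lam ^ 2 * w ^ 2) * hsqn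
          rw [hx2]
          field_simp
  have key_w : ∀ w : ℝ,
      ∫⁻ q, ENNReal.ofReal (Real.exp ((√(n:ℝ) * lam * (inner ℝ q.1 q.2 : ℝ)) * w + 0)) ∂ν.prod ν
        ≤ ENNReal.ofReal (Real.exp ((σ * lam * (1 + ε)) ^ 2 * w ^ 2 / 2)) := by
    intro w
    rw [lintegral_prod _ (hmeasq w).aemeasurable]
    calc ∫⁻ x, ∫⁻ x', ENNReal.ofReal
          (Real.exp ((√(n:ℝ) * lam * (inner ℝ x x' : ℝ)) * w + 0)) ∂ν ∂ν
        ≤ ∫⁻ x, ENNReal.ofReal (Real.exp (σ ^ 2 * lam ^ 2 * w ^ 2 * ‖x‖ ^ 2 / 2)) ∂ν :=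
          lintegral_mono fun x => key_x w x
      _ ≤ ∫⁻ _x in S, ENNReal.ofReal
            (Real.exp ((σ * lam * (1 + ε)) ^ 2 * w ^ 2 / 2)) ∂μ := by
          refine setLIntegral_mono measurable_const fun x hx => ?_
          refine ENNReal.ofReal_le_ofReal (Real.exp_le_exp.mpr ?_)
          have h1 : ‖x‖ ^ 2 ≤ (1 + ε) ^ 2 :=
            pow_le_pow_left₀ (norm_nonneg x) (hSsub x hx) 2
          have h2 : (0:ℝ) ≤ σ ^ 2 * lam ^ 2 * w ^ 2 := by positivity
          nlinarith
      _ = ENNReal.ofReal (Real.exp ((σ * lam * (1 + ε)) ^ 2 * w ^ 2 / 2)) * μ S :=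
          setLIntegral_const S _
      _ ≤ ENNReal.ofReal (Real.exp ((σ * lam * (1 + ε)) ^ 2 * w ^ 2 / 2)) * 1 :=
          mul_le_mul' le_rfl prob_le_one
      _ = _ := mul_one _
  have hc2 : (σ * lam * (1 + ε)) ^ 2 < 1 := by
    have h0 : 0 ≤ σ * lam * (1 + ε) := by positivity
    nlinarith
  calc ∫⁻ q, ENNReal.ofReal (Real.exp ((n * lam ^ 2 / 2) * (inner ℝ q.1 q.2 : ℝ) ^ 2)) ∂ν.prod ν
      = ∫⁻ q, ∫⁻ w, ENNReal.ofReal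
          (Real.exp ((√(n:ℝ) * lam * (inner ℝ q.1 q.2 : ℝ)) * w + 0)) ∂gaussianReal 0 1 ∂ν.prod ν :=
        lintegral_congr fun q => hpt _
    _ = ∫⁻ w, ∫⁻ q, ENNReal.ofReal
          (Real.exp ((√(n:ℝ) * lam * (inner ℝ q.1 q.2 : ℝ)) * w + 0)) ∂ν.prod ν ∂gaussianReal 0 1 :=
        lintegral_lintegral_swap hmeasj.aemeasurable
    _ ≤ ∫⁻ w, ENNReal.ofReal
          (Real.exp ((σ * lam * (1 + ε)) ^ 2 * w ^ 2 / 2)) ∂gaussianReal 0 1 :=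
        lintegral_mono key_w
    _ = _ := lintegral_exp_sq_gaussian hc2

lemma measurable_spikedMap (lam : ℝ) (n : ℕ) :
    Measurable fun q : EuclideanSpace ℝ (Fin n) × (Fin n → Fin n → ℝ) =>
      (fun i j => lam * (q.1 i * q.1 j) + (Real.sqrt n)⁻¹ * q.2 i j) := by
  refine measurable_pi_lambda _ fun i => measurable_pi_lambda _ fun j => ?_
  fun_prop

instance wignerNoise_isProb (n : ℕ) :
    IsProbabilityMeasure (wignerNoise (gaussianReal 0 1) (gaussianReal 0 2) n) := by
  rw [wignerNoise_eq]
  exact Measure.isProbabilityMeasure_map (measurable_msym n).aemeasurable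

lemma GWig_univ (lam : ℝ) (n : ℕ) (ν : Measure (EuclideanSpace ℝ (Fin n)))
    [IsFiniteMeasure ν] : GWig lam ν Set.univ = ν Set.univ := by
  unfold GWig spikedWigner
  rw [Measure.map_apply (measurable_spikedMap lam n) MeasurableSet.univ, Set.preimage_univ,
    ← Set.univ_prod_univ, Measure.prod_prod,
    measure_univ (μ := wignerNoise (gaussianReal 0 1) (gaussianReal 0 2) n), mul_one]

lemma GWig_add (lam : ℝ) (n : ℕ) (ν₁ ν₂ : Measure (EuclideanSpace ℝ (Fin n)))
    [SFinite ν₁] [SFinite ν₂] :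
    GWig lam (ν₁ + ν₂) = GWig lam ν₁ + GWig lam ν₂ := by
  unfold GWig spikedWigner
  rw [Measure.add_prod, Measure.map_add _ _ (measurable_spikedMap lam n)]

end AuxContiguity4

/-- **Proposition 3.9.** If the spike prior `X_n` is `(σ²/n)`-subgaussian (as an ℝⁿ-valued
random variable) and `0 ≤ λ < 1/σ`, then `GWig(λ,X)` is contiguous to `GWig(0)`. -/
theorem subgaussian_prior_contiguity (X : SpikePrior) (σ : ℝ) (hσ : 0 < σ)
    (hsub : ∀ n : ℕ, IsSubgaussianVec (X.μ n) (σ ^ 2 / n))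
    (lam : ℝ) (hlam : 0 ≤ lam) (hlt : lam < 1 / σ) :
    Contiguous (fun n => GWig lam (X.μ n)) GWig0 := by
  intro A hA hP
  have hsl : σ * lam < 1 := by
    rw [mul_comm]
    exact (lt_div_iff₀ hσ).mp hlt
  have hsl0 : 0 ≤ σ * lam := mul_nonneg hσ.le hlam
  set ε : ℝ := (1 - σ * lam) / 2 with hεdef
  have hε0 : 0 < ε := by rw [hεdef]; linarith
  have hc1 : σ * lam * (1 + ε) < 1 := by rw [hεdef]; nlinarith
  set Bc : ℝ≥0∞ := ENNReal.ofReal ((Real.sqrt (2 * Real.pi))⁻¹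
    * ∫ w : ℝ, Real.exp (-((1 - (σ * lam * (1 + ε)) ^ 2) / 2) * w ^ 2)) with hBcdef
  have hBcne : Bc ^ (1/2:ℝ) ≠ ⊤ :=
    ENNReal.rpow_ne_top_of_nonneg (by norm_num) ENNReal.ofReal_ne_top
  have key : ∀ n : ℕ, 1 ≤ n → GWig lam (X.μ n) (A n)
      ≤ GWig0 n (A n) ^ (1/2:ℝ) * Bc ^ (1/2:ℝ) + X.μ n {x | ε < |‖x‖ - 1|} := by
    intro n hn
    haveI := X.isProb n
    set S : Set (EuclideanSpace ℝ (Fin n)) := {x | |‖x‖ - 1| ≤ ε} with hSdef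
    have hSm : MeasurableSet S :=
      measurableSet_le ((continuous_norm.sub continuous_const).abs.measurable) measurable_const
    have hScompl : Sᶜ = {x : EuclideanSpace ℝ (Fin n) | ε < |‖x‖ - 1|} := by
      ext x
      simp [hSdef, not_le]
    have hdec : X.μ n = (X.μ n).restrict S + (X.μ n).restrict Sᶜ :=
      (Measure.restrict_add_restrict_compl hSm).symm
    have hadd : GWig lam (X.μ n) (A n)
        = GWig lam ((X.μ n).restrict S) (A n) + GWig lam ((X.μ n).restrict Sᶜ) (A n) := by
      conv_lhs => rw [hdec]
      rw [GWig_add lam n, Measure.add_apply]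
    rw [hadd]
    refine add_le_add ?_ ?_
    · refine le_trans (GWig_cauchySchwarz lam hn _ (hA n)) ?_
      refine mul_le_mul' le_rfl (ENNReal.rpow_le_rpow ?_ (by norm_num))
      refine second_moment_bound hn σ lam ε hσ hε0 hlam hc1 (X.μ n) (hsub n) hSm ?_
      intro x hx
      have hx' : |‖x‖ - 1| ≤ ε := hx
      have := (abs_le.mp hx').2
      linarith
    · calc GWig lam ((X.μ n).restrict Sᶜ) (A n)
          ≤ GWig lam ((X.μ n).restrict Sᶜ) Set.univ := measure_mono (Set.subset_univ _)
        _ = (X.μ n).restrict Sᶜ Set.univ := GWig_univ lam n _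
        _ = X.μ n Sᶜ := Measure.restrict_apply_univ _
        _ = X.μ n {x | ε < |‖x‖ - 1|} := by rw [hScompl]
  have h1 : Tendsto (fun n => GWig0 n (A n) ^ (1/2:ℝ) * Bc ^ (1/2:ℝ)
      + X.μ n {x | ε < |‖x‖ - 1|}) atTop (𝓝 0) := by
    have ha : Tendsto (fun n => GWig0 n (A n) ^ (1/2:ℝ)) atTop (𝓝 0) := by
      have := (ENNReal.continuous_rpow_const (y := (1/2:ℝ))).tendsto 0 |>.comp hP
      simpa [ENNReal.zero_rpow_of_pos, Function.comp_def] using this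
    have hb := X.norm_tendsto_one ε hε0
    have := (ENNReal.Tendsto.mul_const ha (Or.inr hBcne)).add hb
    simpa using this
  refine tendsto_of_tendsto_of_tendsto_of_le_of_le' tendsto_const_nhds h1 ?_ ?_
  · filter_upwards with n using by simp
  · filter_upwards [eventually_ge_atTop 1] with n hn using key n hn

end
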